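/- arXiv:1810.07067 — 5 statements merged into one kernel-verified Lean document; each statement's English description precedes it below -/
import Mathlib

section
/- Let χ > 1 be a real number and let m ≥ 1 be an integer. Then P_{m+1}(χ) = (4m/(2m+1))·χ·P_m(χ) − ((2m−1)/(2m+1))·P_{m−1}(χ). -/
open Real MeasureTheory

/-- `P χ m = ∫₀^{2π} cos(mφ)/√(χ − cos φ) dφ`. -/
noncomputable def P (χ : ℝ) (m : ℕ) : ℝ :=
  ∫ φ in (0:ℝ)..(2 * Real.pi), Real.cos (m * φ) / Real.sqrt (χ - Real.cos φ)

private lemma key_alg (x A B C S s μ : ℝ) (hs : s ≠ 0) (hss : s * s = x - C) :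
    μ*x*(A/s) - ((2*μ+1)/4)*((A*C - B*S)/s) - ((2*μ-1)/4)*((A*C + B*S)/s)
      = A*(μ*1)*s + B*((0 - -S)/(2*s)) := by
  field_simp
  linear_combination (-8*μ*A) * hss

theorem stmt_0 (χ : ℝ) (hχ : 1 < χ) (m : ℕ) (hm : 1 ≤ m) :
    P χ (m + 1) = (4 * m / (2 * m + 1)) * χ * P χ m
      - ((2 * m - 1) / (2 * m + 1)) * P χ (m - 1) := by
  have hpos : ∀ φ : ℝ, 0 < χ - Real.cos φ := fun φ => by
    have := Real.cos_le_one φ; linarith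
  set s : ℝ → ℝ := fun φ => Real.sqrt (χ - Real.cos φ) with hs_def
  have hspos : ∀ φ, 0 < s φ := fun φ => Real.sqrt_pos.2 (hpos φ)
  have hcont : ∀ k : ℕ, Continuous (fun φ => Real.cos (k * φ) / s φ) := by
    intro k
    exact (Real.continuous_cos.comp (continuous_const.mul continuous_id)).div
      (Real.continuous_sqrt.comp (continuous_const.sub Real.continuous_cos))
      (fun φ => (hspos φ).ne')
  have hint : ∀ k : ℕ, IntervalIntegrable (fun φ => Real.cos (k * φ) / s φ)
      volume 0 (2 * Real.pi) := fun k => (hcont k).intervalIntegrable _ _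
  set F : ℝ → ℝ := fun φ => Real.sin (m * φ) * s φ with hF_def
  have hmcast : ((m - 1 : ℕ) : ℝ) = (m : ℝ) - 1 := by
    push_cast [Nat.cast_sub hm]; ring
  have hderiv : ∀ φ : ℝ, HasDerivAt F
      ((m * χ) * (Real.cos (m * φ) / s φ)
        - ((2 * m + 1) / 4) * (Real.cos ((m + 1 : ℕ) * φ) / s φ)
        - ((2 * m - 1) / 4) * (Real.cos ((m - 1 : ℕ) * φ) / s φ)) φ := by
    intro φ
    have h1 : HasDerivAt (fun φ : ℝ => Real.sin ((m : ℝ) * φ))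
        (Real.cos ((m : ℝ) * φ) * ((m : ℝ) * 1)) φ :=
      (Real.hasDerivAt_sin ((m : ℝ) * φ)).comp φ ((hasDerivAt_id φ).const_mul (m : ℝ))
    have h2 : HasDerivAt (fun φ : ℝ => χ - Real.cos φ) (0 - -Real.sin φ) φ :=
      (hasDerivAt_const φ χ).sub (Real.hasDerivAt_cos φ)
    have h3 : HasDerivAt s ((0 - -Real.sin φ) / (2 * s φ)) φ :=
      h2.sqrt (hpos φ).ne'
    have h := h1.mul h3
    refine h.congr_deriv ?_; symm
    have hc1 : ((m + 1 : ℕ) : ℝ) * φ = (m : ℝ) * φ + φ := by push_cast; ring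
    have hc2 : ((m - 1 : ℕ) : ℝ) * φ = (m : ℝ) * φ - φ := by rw [hmcast]; ring
    rw [hc1, hc2, Real.cos_add, Real.cos_sub]
    exact key_alg χ (Real.cos ((m:ℝ)*φ)) (Real.sin ((m:ℝ)*φ)) (Real.cos φ) (Real.sin φ)
      (s φ) (m : ℝ) (hspos φ).ne' (Real.mul_self_sqrt (hpos φ).le)
  have hintD : IntervalIntegrable
      (fun φ => (↑m * χ) * (Real.cos (↑m * φ) / s φ)
        - ((2 * ↑m + 1) / 4) * (Real.cos ((m + 1 : ℕ) * φ) / s φ)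
        - ((2 * ↑m - 1) / 4) * (Real.cos ((m - 1 : ℕ) * φ) / s φ)) volume 0 (2 * Real.pi) :=
    (((hint m).const_mul _).sub ((hint (m+1)).const_mul _)).sub ((hint (m-1)).const_mul _)
  have h0 : (∫ φ in (0:ℝ)..(2 * Real.pi),
      ((↑m * χ) * (Real.cos (↑m * φ) / s φ)
        - ((2 * ↑m + 1) / 4) * (Real.cos ((m + 1 : ℕ) * φ) / s φ)
        - ((2 * ↑m - 1) / 4) * (Real.cos ((m - 1 : ℕ) * φ) / s φ)))
      = F (2 * Real.pi) - F 0 := by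
    exact intervalIntegral.integral_eq_sub_of_hasDerivAt (fun φ _ => hderiv φ) hintD
  have hF0 : F 0 = 0 := by simp [hF_def]
  have hF2π : F (2 * Real.pi) = 0 := by
    have h : Real.sin ((m : ℝ) * (2 * Real.pi)) = 0 := by
      rw [show (m:ℝ)*(2*Real.pi) = ((2*m:ℕ):ℝ)*Real.pi by push_cast; ring]
      exact Real.sin_nat_mul_pi _
    simp only [hF_def]
    rw [h, zero_mul]
  rw [hF0, hF2π, sub_zero] at h0
  rw [intervalIntegral.integral_sub (((hint m).const_mul _).sub ((hint (m+1)).const_mul _))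
      ((hint (m-1)).const_mul _),
    intervalIntegral.integral_sub ((hint m).const_mul _) ((hint (m+1)).const_mul _),
    intervalIntegral.integral_const_mul, intervalIntegral.integral_const_mul,
    intervalIntegral.integral_const_mul] at h0
  have hPm : (∫ φ in (0:ℝ)..(2 * Real.pi), Real.cos (↑m * φ) / s φ) = P χ m := rfl
  have hPm1 : (∫ φ in (0:ℝ)..(2 * Real.pi), Real.cos ((m + 1 : ℕ) * φ) / s φ) = P χ (m+1) := rfl
  have hPm2 : (∫ φ in (0:ℝ)..(2 * Real.pi), Real.cos ((m - 1 : ℕ) * φ) / s φ) = P χ (m-1) := rfl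
  rw [hPm, hPm1, hPm2] at h0
  have hmpos : (1 : ℝ) ≤ (m : ℝ) := by exact_mod_cast hm
  have hden : (2 * (m : ℝ) + 1) ≠ 0 := by linarith
  field_simp
  linear_combination (-4 : ℝ) * h0
end

section
/- Let χ > 1 be a real number and let m ≥ 1 be an integer. Then P_{m+1}(χ) = P_{m−1}(χ) + 4m·O_m(χ). -/
open Real MeasureTheory

/-- `O χ m = ∫₀^{2π} cos(mφ)·√(χ − cos φ) dφ`. -/
noncomputable def O (χ : ℝ) (m : ℕ) : ℝ :=
  ∫ φ in (0:ℝ)..(2 * Real.pi), Real.cos (m * φ) * Real.sqrt (χ - Real.cos φ)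

theorem stmt_1 (χ : ℝ) (hχ : 1 < χ) (m : ℕ) (hm : 1 ≤ m) :
    P χ (m + 1) = P χ (m - 1) + 4 * m * O χ m := by
  obtain ⟨k, rfl⟩ : ∃ k, m = k + 1 := ⟨m - 1, (Nat.succ_pred_eq_of_pos hm).symm⟩
  have hpos : ∀ φ : ℝ, 0 < χ - Real.cos φ := fun φ => by
    have := Real.cos_le_one φ; linarith
  have hsq : ∀ φ : ℝ, Real.sqrt (χ - Real.cos φ) ≠ 0 := fun φ =>
    ne_of_gt (Real.sqrt_pos.mpr (hpos φ))
  have hcont_sqrt : Continuous fun φ : ℝ => Real.sqrt (χ - Real.cos φ) :=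
    Real.continuous_sqrt.comp (continuous_const.sub Real.continuous_cos)
  set n : ℝ := (k : ℝ) + 1 with hn
  have hderiv : ∀ φ : ℝ, HasDerivAt (fun φ => Real.sin (n * φ) * Real.sqrt (χ - Real.cos φ))
      (n * Real.cos (n * φ) * Real.sqrt (χ - Real.cos φ)
        + Real.sin (n * φ) * (Real.sin φ / (2 * Real.sqrt (χ - Real.cos φ)))) φ := by
    intro φ
    have h1 : HasDerivAt (fun φ : ℝ => Real.sin (n * φ)) (n * Real.cos (n * φ)) φ := by
      have := (Real.hasDerivAt_sin (n * φ)).comp φ ((hasDerivAt_id φ).const_mul n)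
      simpa [Function.comp_def, mul_comm] using this
    have h2 : HasDerivAt (fun φ : ℝ => χ - Real.cos φ) (Real.sin φ) φ := by
      exact ((hasDerivAt_const φ χ).sub (Real.hasDerivAt_cos φ)).congr_deriv (by ring)
    have h3 : HasDerivAt (fun φ : ℝ => Real.sqrt (χ - Real.cos φ))
        (Real.sin φ / (2 * Real.sqrt (χ - Real.cos φ))) φ := by
      have := (Real.hasDerivAt_sqrt (ne_of_gt (hpos φ))).comp φ h2
      exact this.congr_deriv (by ring)
    have := h1.mul h3
    exact this.congr_deriv (by ring)
  have hcont_d : Continuous fun φ : ℝ =>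
      n * Real.cos (n * φ) * Real.sqrt (χ - Real.cos φ)
        + Real.sin (n * φ) * (Real.sin φ / (2 * Real.sqrt (χ - Real.cos φ))) := by
    apply Continuous.add
    · exact ((continuous_const.mul (Real.continuous_cos.comp (continuous_const.mul continuous_id))).mul hcont_sqrt)
    · exact (Real.continuous_sin.comp (continuous_const.mul continuous_id)).mul
        (Real.continuous_sin.div (continuous_const.mul hcont_sqrt)
          (fun φ => by
            have h := Real.sqrt_pos.mpr (hpos φ); positivity))
  have hzero : (∫ φ in (0:ℝ)..(2 * Real.pi),
      (n * Real.cos (n * φ) * Real.sqrt (χ - Real.cos φ)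
        + Real.sin (n * φ) * (Real.sin φ / (2 * Real.sqrt (χ - Real.cos φ))))) = 0 := by
    rw [intervalIntegral.integral_eq_sub_of_hasDerivAt (fun φ _ => hderiv φ)
        (hcont_d.intervalIntegrable _ _)]
    have h2pi : Real.sin (n * (2 * Real.pi)) = 0 := by
      have : n * (2 * Real.pi) = (2 * (k + 1) : ℕ) * Real.pi := by push_cast [hn]; ring
      rw [this, Real.sin_nat_mul_pi]
    simp [h2pi]
  -- pointwise identity for the second summand
  have hpt : ∀ φ : ℝ,
      n * Real.cos (n * φ) * Real.sqrt (χ - Real.cos φ)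
        + Real.sin (n * φ) * (Real.sin φ / (2 * Real.sqrt (χ - Real.cos φ)))
      = n * (Real.cos (n * φ) * Real.sqrt (χ - Real.cos φ))
        + (1/4) * (Real.cos ((k:ℝ) * φ) / Real.sqrt (χ - Real.cos φ)
            - Real.cos (((k:ℝ) + 2) * φ) / Real.sqrt (χ - Real.cos φ)) := by
    intro φ
    have htrig : Real.cos ((k:ℝ) * φ) - Real.cos (((k:ℝ) + 2) * φ)
        = 2 * Real.sin (n * φ) * Real.sin φ := by
      have e1 : (k:ℝ) * φ = n * φ - φ := by rw [hn]; ring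
      have e2 : ((k:ℝ) + 2) * φ = n * φ + φ := by rw [hn]; ring
      rw [e1, e2, Real.cos_sub, Real.cos_add]; ring
    have hs := hsq φ
    have h2s : (2:ℝ) * Real.sqrt (χ - Real.cos φ) ≠ 0 := by simp [hs]
    have h4s : (4:ℝ) * Real.sqrt (χ - Real.cos φ) ≠ 0 := by simp [hs]
    have h4 : Real.sin (n*φ) * (Real.sin φ / (2 * Real.sqrt (χ - Real.cos φ)))
        = (Real.cos ((k:ℝ)*φ) - Real.cos (((k:ℝ)+2)*φ)) / (4 * Real.sqrt (χ - Real.cos φ)) := by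
      rw [mul_div_assoc', div_eq_div_iff h2s h4s, htrig]
      ring
    rw [h4]
    field_simp
  rw [intervalIntegral.integral_congr (fun φ _ => hpt φ)] at hzero
  have hInt1 : IntervalIntegrable (fun φ => Real.cos (n * φ) * Real.sqrt (χ - Real.cos φ))
      volume 0 (2 * Real.pi) :=
    ((Real.continuous_cos.comp (continuous_const.mul continuous_id)).mul hcont_sqrt).intervalIntegrable _ _
  have hInt2 : ∀ c : ℝ, IntervalIntegrable (fun φ => Real.cos (c * φ) / Real.sqrt (χ - Real.cos φ))
      volume 0 (2 * Real.pi) := fun c =>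
    ((Real.continuous_cos.comp (continuous_const.mul continuous_id)).div hcont_sqrt
      (fun φ => hsq φ)).intervalIntegrable _ _
  rw [intervalIntegral.integral_add (hInt1.const_mul n)
        (((hInt2 k).sub (hInt2 ((k:ℝ)+2))).const_mul (1/4)),
      intervalIntegral.integral_const_mul, intervalIntegral.integral_const_mul,
      intervalIntegral.integral_sub (hInt2 k) (hInt2 ((k:ℝ)+2))] at hzero
  have hO : O χ (k+1) = ∫ φ in (0:ℝ)..(2 * Real.pi), Real.cos (n * φ) * Real.sqrt (χ - Real.cos φ) := by
    rw [O]; apply intervalIntegral.integral_congr; intro φ _; push_cast [hn]; ring_nf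
  have hPk : P χ k = ∫ φ in (0:ℝ)..(2 * Real.pi), Real.cos ((k:ℝ) * φ) / Real.sqrt (χ - Real.cos φ) := by
    simp only [P]
  have hPk2 : P χ (k+2) = ∫ φ in (0:ℝ)..(2 * Real.pi), Real.cos (((k:ℝ)+2) * φ) / Real.sqrt (χ - Real.cos φ) := by
    rw [P]; apply intervalIntegral.integral_congr; intro φ _; push_cast; ring_nf
  have hgoal : P χ (k + 1 + 1) = P χ (k + 2) := by norm_num
  have hsub : P χ (k + 1 - 1) = P χ k := by norm_num
  rw [hgoal, hsub, hPk, hPk2, hO]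
  rw [hn] at hzero
  push_cast
  linarith [hzero]
end

section
/- Let χ > 1 be a real number and let m ≥ 1 be an integer. Then χ·P_m(χ) = (2m+1)·O_m(χ) + P_{m−1}(χ). -/
open Real MeasureTheory

theorem stmt_2 (χ : ℝ) (hχ : 1 < χ) (m : ℕ) (hm : 1 ≤ m) :
    χ * P χ m = (2 * m + 1) * O χ m + P χ (m - 1) := by
  obtain ⟨n, rfl⟩ : ∃ n, m = n + 1 := ⟨m - 1, (Nat.succ_pred_eq_of_pos hm).symm⟩
  have hpos : ∀ φ : ℝ, 0 < χ - Real.cos φ := fun φ =>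
    sub_pos.2 (lt_of_le_of_lt (Real.cos_le_one φ) hχ)
  have hsq : ∀ φ : ℝ, Real.sqrt (χ - Real.cos φ) ≠ 0 := fun φ =>
    ne_of_gt (Real.sqrt_pos.2 (hpos φ))
  have hconts : Continuous fun φ : ℝ => Real.sqrt (χ - Real.cos φ) :=
    (continuous_const.sub Real.continuous_cos).sqrt
  -- integrals with real index
  set Q : ℝ → ℝ := fun b => ∫ φ in (0:ℝ)..(2 * Real.pi),
      Real.cos (b * φ) / Real.sqrt (χ - Real.cos φ) with hQ
  set R : ℝ → ℝ := fun b => ∫ φ in (0:ℝ)..(2 * Real.pi),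
      Real.cos (b * φ) * Real.sqrt (χ - Real.cos φ) with hR
  have hintQ : ∀ b : ℝ, IntervalIntegrable
      (fun φ => Real.cos (b * φ) / Real.sqrt (χ - Real.cos φ)) volume 0 (2 * Real.pi) :=
    fun b => (((Real.continuous_cos.comp (continuous_const.mul continuous_id)).div
      hconts hsq)).intervalIntegrable _ _
  have hintR : ∀ b : ℝ, IntervalIntegrable
      (fun φ => Real.cos (b * φ) * Real.sqrt (χ - Real.cos φ)) volume 0 (2 * Real.pi) :=
    fun b => ((Real.continuous_cos.comp (continuous_const.mul continuous_id)).mul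
      hconts).intervalIntegrable _ _
  -- E1 : χ * Q b = R b + (Q (b+1) + Q (b-1)) / 2
  have E1 : ∀ b : ℝ, χ * Q b = R b + (Q (b + 1) + Q (b - 1)) / 2 := by
    intro b
    have hpt : ∀ φ : ℝ, χ * (Real.cos (b * φ) / Real.sqrt (χ - Real.cos φ))
        = Real.cos (b * φ) * Real.sqrt (χ - Real.cos φ)
          + (Real.cos ((b + 1) * φ) / Real.sqrt (χ - Real.cos φ)
            + Real.cos ((b - 1) * φ) / Real.sqrt (χ - Real.cos φ)) / 2 := by
      intro φ
      have hs := hsq φ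
      have h1 : Real.cos ((b + 1) * φ) + Real.cos ((b - 1) * φ)
          = 2 * Real.cos (b * φ) * Real.cos φ := by
        rw [add_mul, sub_mul, one_mul, Real.cos_add, Real.cos_sub]; ring
      have h2 : Real.sqrt (χ - Real.cos φ) * Real.sqrt (χ - Real.cos φ) = χ - Real.cos φ :=
        Real.mul_self_sqrt (hpos φ).le
      rw [mul_comm (b + 1) φ, mul_comm (b - 1) φ] at h1
      field_simp
      linear_combination (-1) * h1 - 2 * Real.cos (b * φ) * h2
    calc χ * Q b = ∫ φ in (0:ℝ)..(2 * Real.pi),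
          χ * (Real.cos (b * φ) / Real.sqrt (χ - Real.cos φ)) := by
          rw [hQ]; exact (intervalIntegral.integral_const_mul χ _).symm
      _ = ∫ φ in (0:ℝ)..(2 * Real.pi),
          (Real.cos (b * φ) * Real.sqrt (χ - Real.cos φ)
            + (Real.cos ((b + 1) * φ) / Real.sqrt (χ - Real.cos φ)
              + Real.cos ((b - 1) * φ) / Real.sqrt (χ - Real.cos φ)) / 2) :=
          intervalIntegral.integral_congr (fun φ _ => hpt φ)
      _ = R b + (Q (b + 1) + Q (b - 1)) / 2 := by
          rw [intervalIntegral.integral_add (hintR b)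
              (((hintQ (b + 1)).add (hintQ (b - 1))).div_const 2),
            intervalIntegral.integral_div,
            intervalIntegral.integral_add (hintQ (b + 1)) (hintQ (b - 1))]
  -- E2 : integration by parts / FTC
  have E2 : ∀ k : ℕ, ((k : ℝ) + 1) * R ((k : ℝ) + 1)
      + (Q ((k : ℝ)) - Q ((k : ℝ) + 1 + 1)) / 4 = 0 := by
    intro k
    set b : ℝ := (k : ℝ) + 1 with hb
    have hderiv : ∀ φ : ℝ, HasDerivAt (fun x => Real.sin (b * x) * Real.sqrt (χ - Real.cos x))
        (Real.cos (b * φ) * b * Real.sqrt (χ - Real.cos φ)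
          + Real.sin (b * φ) * (1 / (2 * Real.sqrt (χ - Real.cos φ)) * Real.sin φ)) φ := by
      intro φ
      have hlin : HasDerivAt (fun x : ℝ => b * x) b φ := by
        simpa using (hasDerivAt_id φ).const_mul b
      have h1 : HasDerivAt (fun x : ℝ => Real.sin (b * x)) (Real.cos (b * φ) * b) φ :=
        (Real.hasDerivAt_sin (b * φ)).comp φ hlin
      have h2 : HasDerivAt (fun x : ℝ => χ - Real.cos x) (Real.sin φ) φ := by
        simpa using (Real.hasDerivAt_cos φ).const_sub χ
      have h3 : HasDerivAt (fun x : ℝ => Real.sqrt (χ - Real.cos x))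
          (1 / (2 * Real.sqrt (χ - Real.cos φ)) * Real.sin φ) φ :=
        (Real.hasDerivAt_sqrt (ne_of_gt (hpos φ))).comp φ h2
      exact h1.mul h3
    have hint : ∫ φ in (0:ℝ)..(2 * Real.pi),
        (Real.cos (b * φ) * b * Real.sqrt (χ - Real.cos φ)
          + Real.sin (b * φ) * (1 / (2 * Real.sqrt (χ - Real.cos φ)) * Real.sin φ)) = 0 := by
      rw [intervalIntegral.integral_eq_sub_of_hasDerivAt (fun φ _ => hderiv φ)
        (by
          apply Continuous.intervalIntegrable
          apply Continuous.add
          · exact ((Real.continuous_cos.comp (continuous_const.mul continuous_id)).mul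
              continuous_const).mul hconts
          · exact (Real.continuous_sin.comp (continuous_const.mul continuous_id)).mul
              ((continuous_const.div (continuous_const.mul hconts)
                (fun φ => mul_ne_zero two_ne_zero (hsq φ))).mul Real.continuous_sin))]
      have hb2 : b * (2 * Real.pi) = (2 * k + 2 : ℕ) * Real.pi := by push_cast [hb]; ring
      rw [hb2, Real.sin_nat_mul_pi]
      simp
    have hpt : ∀ φ : ℝ, Real.cos (b * φ) * b * Real.sqrt (χ - Real.cos φ)
          + Real.sin (b * φ) * (1 / (2 * Real.sqrt (χ - Real.cos φ)) * Real.sin φ)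
        = b * (Real.cos (b * φ) * Real.sqrt (χ - Real.cos φ))
          + (Real.cos ((b - 1) * φ) / Real.sqrt (χ - Real.cos φ)
            - Real.cos ((b + 1) * φ) / Real.sqrt (χ - Real.cos φ)) / 4 := by
      intro φ
      have hs := hsq φ
      have h1 : Real.cos ((b - 1) * φ) - Real.cos ((b + 1) * φ)
          = 2 * Real.sin (b * φ) * Real.sin φ := by
        rw [add_mul, sub_mul, one_mul, Real.cos_add, Real.cos_sub]; ring
      rw [mul_comm (b + 1) φ, mul_comm (b - 1) φ] at h1
      field_simp
      linear_combination (-2) * h1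
    have hsplit : (0:ℝ) = b * R b + (Q (b - 1) - Q (b + 1)) / 4 := by
      rw [← hint, intervalIntegral.integral_congr (fun φ _ => hpt φ),
        intervalIntegral.integral_add
          ((hintR b).const_mul b) (((hintQ (b - 1)).sub (hintQ (b + 1))).div_const 4),
        intervalIntegral.integral_const_mul, intervalIntegral.integral_div,
        intervalIntegral.integral_sub (hintQ (b - 1)) (hintQ (b + 1))]
    have hb1 : b - 1 = (k : ℝ) := by rw [hb]; ring
    rw [hb1] at hsplit
    linarith [hsplit]
  -- assemble
  have hPQ : ∀ k : ℕ, P χ k = Q (k : ℝ) := fun k => rfl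
  have hOR : ∀ k : ℕ, O χ k = R (k : ℝ) := fun k => rfl
  have e1 := E1 ((n : ℝ) + 1)
  have e2 := E2 n
  have hadd : (n : ℝ) + 1 - 1 = (n : ℝ) := by ring
  rw [hadd] at e1
  have hsub : n + 1 - 1 = n := rfl
  have hcast1 : ((n + 1 : ℕ) : ℝ) = (n : ℝ) + 1 := by push_cast; ring
  rw [hsub, hPQ, hPQ, hOR, hcast1]
  linarith [e1, e2]
end

section
/- Let χ > 1 be a real number and let m ≥ 1 be an integer. Then S_m(χ) = ((1−2m)·χ·P_m(χ) − (1−2m)·P_{m−1}(χ))/(χ² − 1). -/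
open Real MeasureTheory

/-- `S χ m = ∫₀^{2π} cos(mφ)/(χ − cos φ)^{3/2} dφ`. -/
noncomputable def S (χ : ℝ) (m : ℕ) : ℝ :=
  ∫ φ in (0:ℝ)..(2 * Real.pi), Real.cos (m * φ) / (χ - Real.cos φ) ^ (3/2 : ℝ)

private lemma poly_id (χ k c s S C : ℝ) (h : s^2 + c^2 = 1) :
    2*((1-2*k)*χ*C - (1-2*k)*(C*c+S*s))*(χ-c) - 2*(χ^2-1)*C
    = 2*(-2*χ*k*C + 2*(k-1)*(C*c+S*s))*(χ-c) - (-2*χ*S + 2*(S*c - C*s))*s := by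
  linear_combination (-2*C) * h

theorem stmt_3 (χ : ℝ) (hχ : 1 < χ) (m : ℕ) (hm : 1 ≤ m) :
    S χ m = ((1 - 2 * m) * χ * P χ m - (1 - 2 * m) * P χ (m - 1)) / (χ ^ 2 - 1) := by
  set k : ℝ := (m : ℝ) with hk
  have hpos : ∀ φ : ℝ, 0 < χ - Real.cos φ := fun φ =>
    sub_pos.2 (lt_of_le_of_lt (Real.cos_le_one φ) hχ)
  have hne : ∀ φ : ℝ, Real.sqrt (χ - Real.cos φ) ≠ 0 := fun φ =>
    (Real.sqrt_pos.2 (hpos φ)).ne'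
  have hcube : ∀ φ : ℝ, (χ - Real.cos φ) ^ (3/2 : ℝ)
      = (χ - Real.cos φ) * Real.sqrt (χ - Real.cos φ) := by
    intro φ
    rw [show (3/2 : ℝ) = 1 + 1/2 by norm_num, Real.rpow_add (hpos φ), Real.rpow_one,
      ← Real.sqrt_eq_rpow]
  have hcubene : ∀ φ : ℝ, (χ - Real.cos φ) ^ (3/2 : ℝ) ≠ 0 := fun φ =>
    (Real.rpow_pos_of_pos (hpos φ) _).ne'
  -- the antiderivative
  set F : ℝ → ℝ := fun φ =>
    (-2*χ * Real.sin (k*φ) + 2 * Real.sin ((k-1)*φ)) / Real.sqrt (χ - Real.cos φ) with hF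
  set G : ℝ → ℝ := fun φ =>
    (1-2*k)*χ * (Real.cos (k*φ) / Real.sqrt (χ - Real.cos φ))
    - (1-2*k) * (Real.cos ((k-1)*φ) / Real.sqrt (χ - Real.cos φ))
    - (χ^2-1) * (Real.cos (k*φ) / (χ - Real.cos φ) ^ (3/2 : ℝ)) with hG
  have hderiv : ∀ φ : ℝ, HasDerivAt F (G φ) φ := by
    intro φ
    have hkφ : HasDerivAt (fun φ : ℝ => k * φ) k φ := by
      simpa using (hasDerivAt_id φ).const_mul k
    have hkφ' : HasDerivAt (fun φ : ℝ => (k-1) * φ) (k-1) φ := by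
      simpa using (hasDerivAt_id φ).const_mul (k-1)
    have hnum : HasDerivAt (fun φ : ℝ => -2*χ * Real.sin (k*φ) + 2 * Real.sin ((k-1)*φ))
        (-2*χ * (Real.cos (k*φ) * k) + 2 * (Real.cos ((k-1)*φ) * (k-1))) φ := by
      exact (((Real.hasDerivAt_sin (k*φ)).comp φ hkφ).const_mul (-2*χ)).add
        (((Real.hasDerivAt_sin ((k-1)*φ)).comp φ hkφ').const_mul 2)
    have hin : HasDerivAt (fun φ : ℝ => χ - Real.cos φ) (Real.sin φ) φ := by
      simpa using (Real.hasDerivAt_cos φ).const_sub χ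
    have hden : HasDerivAt (fun φ : ℝ => Real.sqrt (χ - Real.cos φ))
        (Real.sin φ / (2 * Real.sqrt (χ - Real.cos φ))) φ := hin.sqrt (hpos φ).ne'
    have hd := hnum.div hden (hne φ)
    have heq : G φ = ((-2*χ * (Real.cos (k*φ) * k) + 2 * (Real.cos ((k-1)*φ) * (k-1))) *
        Real.sqrt (χ - Real.cos φ) -
        (-2*χ * Real.sin (k*φ) + 2 * Real.sin ((k-1)*φ)) *
        (Real.sin φ / (2 * Real.sqrt (χ - Real.cos φ)))) /
        Real.sqrt (χ - Real.cos φ) ^ 2 := by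
      have hr2 : Real.sqrt (χ - Real.cos φ) ^ 2 = χ - Real.cos φ :=
        Real.sq_sqrt (hpos φ).le
      have hcs : Real.cos ((k-1)*φ) = Real.cos (k*φ) * Real.cos φ + Real.sin (k*φ) * Real.sin φ := by
        rw [show (k-1)*φ = k*φ - φ by ring, Real.cos_sub]
      have hss : Real.sin ((k-1)*φ) = Real.sin (k*φ) * Real.cos φ - Real.cos (k*φ) * Real.sin φ := by
        rw [show (k-1)*φ = k*φ - φ by ring, Real.sin_sub]
      have key := poly_id χ k (Real.cos φ) (Real.sin φ) (Real.sin (k*φ)) (Real.cos (k*φ))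
        (Real.sin_sq_add_cos_sq φ)
      show (1-2*k)*χ * (Real.cos (k*φ) / Real.sqrt (χ - Real.cos φ))
          - (1-2*k) * (Real.cos ((k-1)*φ) / Real.sqrt (χ - Real.cos φ))
          - (χ^2-1) * (Real.cos (k*φ) / (χ - Real.cos φ) ^ (3/2 : ℝ)) = _
      rw [hcube φ, hcs, hss]
      set r := Real.sqrt (χ - Real.cos φ) with hr
      have hr2' : r^2 = χ - Real.cos φ := Real.sq_sqrt (hpos φ).le
      have hrne : r ≠ 0 := hne φ
      rw [← hr2']
      rw [← hr2'] at key
      field_simp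
      linear_combination (1/2 : ℝ) * key
    rw [heq]; exact hd
  -- continuity / integrability
  have hcsqrt : Continuous fun φ : ℝ => Real.sqrt (χ - Real.cos φ) :=
    Real.continuous_sqrt.comp (continuous_const.sub Real.continuous_cos)
  have hc1 : ∀ a : ℝ, Continuous fun φ : ℝ => Real.cos (a*φ) / Real.sqrt (χ - Real.cos φ) :=
    fun a => (Real.continuous_cos.comp (continuous_const.mul continuous_id)).div hcsqrt hne
  have hc3 : Continuous fun φ : ℝ => Real.cos (k*φ) / (χ - Real.cos φ) ^ (3/2 : ℝ) :=
    (Real.continuous_cos.comp (continuous_const.mul continuous_id)).div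
      ((continuous_const.sub Real.continuous_cos).rpow_const fun x => Or.inl (hpos x).ne')
      hcubene
  have hGint : ∫ φ in (0:ℝ)..(2*Real.pi), G φ = F (2*Real.pi) - F 0 := by
    apply intervalIntegral.integral_eq_sub_of_hasDerivAt (fun φ _ => hderiv φ)
    apply Continuous.intervalIntegrable
    exact ((continuous_const.mul (hc1 k)).sub (continuous_const.mul (hc1 (k-1)))).sub
      (continuous_const.mul hc3)
  have hF0 : F 0 = 0 := by simp [hF]
  have hF2π : F (2*Real.pi) = 0 := by
    have h1 : Real.sin (k * (2*Real.pi)) = 0 := by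
      have := Real.sin_nat_mul_pi (2*m)
      rw [show (((2*m : ℕ)) : ℝ) * Real.pi = k * (2*Real.pi) by push_cast [hk]; ring] at this
      exact this
    have h2 : Real.sin ((k-1) * (2*Real.pi)) = 0 := by
      have := Real.sin_nat_mul_pi (2*(m-1))
      rw [show (((2*(m-1) : ℕ)) : ℝ) * Real.pi = (k-1) * (2*Real.pi) by
        push_cast [hk, Nat.cast_sub hm]; ring] at this
      exact this
    simp [hF, h1, h2]
  -- split the integral
  have hsplit : ∫ φ in (0:ℝ)..(2*Real.pi), G φ
      = (1-2*k)*χ * P χ m - (1-2*k) * P χ (m-1) - (χ^2-1) * S χ m := by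
    have hi1 : IntervalIntegrable (fun φ : ℝ => (1-2*k)*χ * (Real.cos (k*φ) / Real.sqrt (χ - Real.cos φ))) volume 0 (2*Real.pi) :=
      (continuous_const.mul (hc1 k)).intervalIntegrable _ _
    have hi2 : IntervalIntegrable (fun φ : ℝ => (1-2*k) * (Real.cos ((k-1)*φ) / Real.sqrt (χ - Real.cos φ))) volume 0 (2*Real.pi) :=
      (continuous_const.mul (hc1 (k-1))).intervalIntegrable _ _
    have hi3 : IntervalIntegrable (fun φ : ℝ => (χ^2-1) * (Real.cos (k*φ) / (χ - Real.cos φ) ^ (3/2 : ℝ))) volume 0 (2*Real.pi) :=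
      (continuous_const.mul hc3).intervalIntegrable _ _
    have hcast : ((m-1 : ℕ) : ℝ) = k - 1 := by
      rw [Nat.cast_sub hm, Nat.cast_one]
    rw [hG]
    rw [intervalIntegral.integral_sub (hi1.sub hi2) hi3,
      intervalIntegral.integral_sub hi1 hi2,
      intervalIntegral.integral_const_mul, intervalIntegral.integral_const_mul,
      intervalIntegral.integral_const_mul]
    rw [P, P, S, hcast]
  have hmain : (1-2*k)*χ * P χ m - (1-2*k) * P χ (m-1) - (χ^2-1) * S χ m = 0 := by
    rw [← hsplit, hGint, hF0, hF2π, sub_zero]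
  have hχ2 : χ^2 - 1 ≠ 0 := by nlinarith
  rw [hk] at hmain
  field_simp
  linarith [hmain]
end

section
/- Let χ > 1 be a real number and let m ≥ 1 be an integer. Then χ·U_m(χ) = S_m(χ) − (1/2)·(P_{m+1}(χ) + P_{m−1}(χ)) − m·(P_{m+1}(χ) − P_{m−1}(χ)). -/
open Real MeasureTheory

/-- `U χ m = ∫₀^{2π} cos φ · cos(mφ)/(χ − cos φ)^{3/2} dφ`. -/
noncomputable def U (χ : ℝ) (m : ℕ) : ℝ :=
  ∫ φ in (0:ℝ)..(2 * Real.pi),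
    Real.cos φ * Real.cos (m * φ) / (χ - Real.cos φ) ^ (3/2 : ℝ)

/- Auxiliary integer-indexed versions written with rpow. -/
noncomputable def Pz (χ : ℝ) (k : ℤ) : ℝ :=
  ∫ φ in (0:ℝ)..(2 * Real.pi), Real.cos (k * φ) * (χ - Real.cos φ) ^ (-(1/2) : ℝ)

noncomputable def Sz (χ : ℝ) (k : ℤ) : ℝ :=
  ∫ φ in (0:ℝ)..(2 * Real.pi), Real.cos (k * φ) * (χ - Real.cos φ) ^ (-(3/2) : ℝ)

noncomputable def Uz (χ : ℝ) (k : ℤ) : ℝ :=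
  ∫ φ in (0:ℝ)..(2 * Real.pi),
    Real.cos φ * Real.cos (k * φ) * (χ - Real.cos φ) ^ (-(3/2) : ℝ)

section aux
variable {χ : ℝ} (hχ : 1 < χ)
include hχ

lemma hc (φ : ℝ) : 0 < χ - Real.cos φ := by
  have := Real.cos_le_one φ; linarith

lemma contAux {f : ℝ → ℝ} (hf : Continuous f) (e : ℝ) :
    Continuous fun φ => f φ * (χ - Real.cos φ) ^ e :=
  hf.mul (Continuous.rpow_const (by fun_prop) fun x => Or.inl (hc hχ x).ne')

lemma crpow (e : ℝ) : Continuous fun φ => (χ - Real.cos φ) ^ e :=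
  Continuous.rpow_const (by fun_prop) fun x => Or.inl (hc hχ x).ne'

lemma iiAux {f : ℝ → ℝ} (hf : Continuous f) (e : ℝ) :
    IntervalIntegrable (fun φ => f φ * (χ - Real.cos φ) ^ e) volume 0 (2 * Real.pi) :=
  (contAux hχ hf e).intervalIntegrable _ _

lemma P_eq (n : ℕ) : P χ n = Pz χ n := by
  refine intervalIntegral.integral_congr fun x _ => ?_
  have h := (hc (φ := x) hχ)
  rw [Real.sqrt_eq_rpow, div_eq_mul_inv, ← Real.rpow_neg h.le]
  push_cast; ring_nf

lemma S_eq (n : ℕ) : S χ n = Sz χ n := by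
  refine intervalIntegral.integral_congr fun x _ => ?_
  have h := (hc (φ := x) hχ)
  rw [div_eq_mul_inv, ← Real.rpow_neg h.le]
  push_cast; ring_nf

lemma U_eq (n : ℕ) : U χ n = Uz χ n := by
  refine intervalIntegral.integral_congr fun x _ => ?_
  have h := (hc (φ := x) hχ)
  rw [div_eq_mul_inv, ← Real.rpow_neg h.le]
  push_cast; ring_nf

/-- product-to-sum -/
lemma Uz_eq (k : ℤ) : Uz χ k = (Sz χ (k + 1) + Sz χ (k - 1)) / 2 := by
  have h1 : Uz χ k = ∫ φ in (0:ℝ)..(2 * Real.pi),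
      (Real.cos ((k + 1 : ℤ) * φ) * (χ - Real.cos φ) ^ (-(3/2) : ℝ)
        + Real.cos ((k - 1 : ℤ) * φ) * (χ - Real.cos φ) ^ (-(3/2) : ℝ)) / 2 := by
    refine intervalIntegral.integral_congr fun x _ => ?_
    push_cast
    rw [add_mul, sub_mul, one_mul, Real.cos_add, Real.cos_sub]
    ring
  rw [h1, intervalIntegral.integral_div,
    intervalIntegral.integral_add (iiAux hχ (by fun_prop) _) (iiAux hχ (by fun_prop) _)]
  rfl

/-- χ·Sz = Uz + Pz. -/
lemma chi_Sz (k : ℤ) : χ * Sz χ k = Uz χ k + Pz χ k := by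
  have h1 : χ * Sz χ k = ∫ φ in (0:ℝ)..(2 * Real.pi),
      (Real.cos φ * Real.cos (k * φ) * (χ - Real.cos φ) ^ (-(3/2) : ℝ)
        + Real.cos (k * φ) * (χ - Real.cos φ) ^ (-(1/2) : ℝ)) := by
    rw [Sz, ← intervalIntegral.integral_const_mul]
    refine intervalIntegral.integral_congr fun x _ => ?_
    have h := (hc (φ := x) hχ)
    have e1 : (χ - Real.cos x) ^ (-(1/2) : ℝ)
        = (χ - Real.cos x) * (χ - Real.cos x) ^ (-(3/2) : ℝ) := by
      rw [show (-(1/2) : ℝ) = 1 + (-(3/2)) by norm_num, Real.rpow_add h, Real.rpow_one]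
    rw [e1]; ring
  rw [h1, intervalIntegral.integral_add (iiAux hχ (by fun_prop) _) (iiAux hχ (by fun_prop) _)]
  rfl

/-- Integration by parts identity. -/
lemma ibp (k : ℤ) : (k : ℝ) * Pz χ k = (Sz χ (k - 1) - Sz χ (k + 1)) / 4 := by
  set g : ℝ → ℝ := fun φ => Real.sin ((k : ℝ) * φ) * (χ - Real.cos φ) ^ (-(1/2) : ℝ) with hg
  set g' : ℝ → ℝ := fun φ =>
    (Real.cos ((k : ℝ) * φ) * (k : ℝ)) * (χ - Real.cos φ) ^ (-(1/2) : ℝ)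
      + Real.sin ((k : ℝ) * φ) * (Real.sin φ * (-(1/2)) * (χ - Real.cos φ) ^ (-(3/2) : ℝ)) with hg'
  have hderiv : ∀ x ∈ Set.uIcc (0:ℝ) (2 * Real.pi), HasDerivAt g (g' x) x := by
    intro x _
    have h1 : HasDerivAt (fun φ : ℝ => Real.sin ((k : ℝ) * φ))
        (Real.cos ((k : ℝ) * x) * (k : ℝ)) x := by
      have := (Real.hasDerivAt_sin ((k : ℝ) * x)).comp x
        ((hasDerivAt_id x).const_mul (k : ℝ))
      simpa [Function.comp_def] using this
    have h2 : HasDerivAt (fun φ : ℝ => χ - Real.cos φ) (Real.sin x) x := by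
      simpa using (Real.hasDerivAt_cos x).const_sub χ
    have h3 := h2.rpow_const (p := (-(1/2) : ℝ)) (Or.inl (hc (φ := x) hχ).ne')
    have e1 : (-(1/2) : ℝ) - 1 = -(3/2) := by norm_num
    rw [e1] at h3
    exact h1.mul h3
  have hint : IntervalIntegrable g' volume 0 (2 * Real.pi) := by
    apply Continuous.intervalIntegrable
    exact ((by fun_prop : Continuous fun φ : ℝ => Real.cos ((k : ℝ) * φ) * (k : ℝ)).mul
        (crpow hχ _)).add
      ((by fun_prop : Continuous fun φ : ℝ => Real.sin ((k : ℝ) * φ)).mul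
        (((by fun_prop : Continuous fun φ : ℝ => Real.sin φ * (-(1/2))).mul (crpow hχ _))))
  have hftc := intervalIntegral.integral_eq_sub_of_hasDerivAt hderiv hint
  have hz : g (2 * Real.pi) - g 0 = 0 := by
    have e2 : (k : ℝ) * (2 * Real.pi) = ((2 * k : ℤ) : ℝ) * Real.pi := by push_cast; ring
    simp only [hg, e2, Real.sin_int_mul_pi, mul_zero, Real.sin_zero, zero_mul, sub_zero]
  rw [hz] at hftc
  -- rewrite integrand of hftc
  have h4 : ∫ y in (0:ℝ)..(2 * Real.pi), g' y
      = ∫ φ in (0:ℝ)..(2 * Real.pi),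
        ((k : ℝ) * (Real.cos ((k : ℤ) * φ) * (χ - Real.cos φ) ^ (-(1/2) : ℝ))
          + (-(1/4)) * (Real.cos ((k - 1 : ℤ) * φ) * (χ - Real.cos φ) ^ (-(3/2) : ℝ)
            - Real.cos ((k + 1 : ℤ) * φ) * (χ - Real.cos φ) ^ (-(3/2) : ℝ))) := by
    refine intervalIntegral.integral_congr fun x _ => ?_
    simp only [hg']
    push_cast
    rw [sub_mul, add_mul, one_mul, Real.cos_sub, Real.cos_add]
    ring
  rw [h4] at hftc
  rw [intervalIntegral.integral_add, intervalIntegral.integral_const_mul,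
    intervalIntegral.integral_const_mul,
    intervalIntegral.integral_sub (iiAux hχ (by fun_prop) _) (iiAux hχ (by fun_prop) _)]
    at hftc
  · have : (k : ℝ) * Pz χ k + (-(1/4)) * (Sz χ (k - 1) - Sz χ (k + 1)) = 0 := hftc
    linarith
  · exact (iiAux hχ (by fun_prop) _).const_mul _
  · exact ((iiAux hχ (by fun_prop) _).sub (iiAux hχ (by fun_prop) _)).const_mul _

end aux

theorem stmt_5 (χ : ℝ) (hχ : 1 < χ) (m : ℕ) (hm : 1 ≤ m) :
    χ * U χ m = S χ m - (1/2) * (P χ (m + 1) + P χ (m - 1))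
      - m * (P χ (m + 1) - P χ (m - 1)) := by
  have hcast : ((m - 1 : ℕ) : ℤ) = (m : ℤ) - 1 := by omega
  rw [U_eq hχ, S_eq hχ, P_eq hχ, P_eq hχ, hcast]
  push_cast
  have E1 := Uz_eq hχ (m : ℤ)
  have E2 := Uz_eq hχ ((m : ℤ) + 1)
  have E3 := Uz_eq hχ ((m : ℤ) - 1)
  have F1 := chi_Sz hχ ((m : ℤ) + 1)
  have F2 := chi_Sz hχ ((m : ℤ) - 1)
  have G1 := ibp hχ ((m : ℤ) + 1)
  have G2 := ibp hχ ((m : ℤ) - 1)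
  simp only [add_sub_cancel_right, sub_add_cancel] at E2 E3 G1 G2
  push_cast at G1 G2
  linear_combination χ * E1 + (1/2) * F1 + (1/2) * F2 + (1/2) * E2 + (1/2) * E3 + G1 - G2
end
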